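/- Suppose Hypothesis (H) holds. If μ is a nonzero finite nonnegative Borel measure on M satisfying ℒμ = λ₀ μ for some λ₀ > 0, then the support of μ is all of M. -/

import Mathlib

open MeasureTheory Filter Topology

noncomputable section

variable {M : Type*}

/-- The iterated transition kernel: `iterP P 0 x = δ_x` (identity kernel), so that
`iterP P 1 = P` and `iterP P (n+1) x A = ∫ iterP P n y A ∂(P x)`. -/
def iterP [MeasurableSpace M] (P : M → Measure M) : ℕ → M → Measure M
  | 0 => fun x => Measure.dirac x
  | n + 1 => fun x => (P x).bind (iterP P n)

/-- Hypothesis (H) of the paper: `P` is a measurable sub-Markovian kernel; (H1) each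
`P x` is absolutely continuous w.r.t. `ρ` and `x ↦ dP(x,·)/dρ` is continuous into `L¹(ρ)`;
(H2) `ρ(M∖Z) > 0` where `Z = {x | P(x,M) = 0}`, and from every non-escaping point every
nonempty open set is reached with positive probability in some positive time. -/
structure HypH [MetricSpace M] [MeasurableSpace M] (P : M → Measure M) (ρ : Measure M) : Prop where
  meas : Measurable P
  subMarkov : ∀ x, P x Set.univ ≤ 1
  absCont : ∀ x, P x ≪ ρ
  densityCont : ∀ ε : ℝ, 0 < ε → ∃ δ : ℝ, 0 < δ ∧ ∀ x z : M, dist x z < δ →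
      (∫⁻ y, ((P x).rnDeriv ρ y - (P z).rnDeriv ρ y)
        + ((P z).rnDeriv ρ y - (P x).rnDeriv ρ y) ∂ρ) < ENNReal.ofReal ε
  rhoPos : 0 < ρ {x | P x Set.univ ≠ 0}
  irred : ∀ x, P x Set.univ ≠ 0 → ∀ A : Set M, IsOpen A → A.Nonempty →
      ∃ n : ℕ, 0 < n ∧ 0 < iterP P n x A

lemma measurable_iterP [MeasurableSpace M] {P : M → Measure M} (hP : Measurable P) :
    ∀ n, Measurable (iterP P n)
  | 0 => Measure.measurable_dirac
  | n + 1 => (Measure.measurable_bind' (measurable_iterP hP n)).comp hP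

lemma smul_bind' [MeasurableSpace M] (c : ENNReal) (μ : Measure M) {f : M → Measure M}
    (hf : Measurable f) : (c • μ).bind f = c • μ.bind f := by
  ext s hs
  rw [Measure.bind_apply hs hf.aemeasurable, Measure.smul_apply, Measure.bind_apply hs hf.aemeasurable,
    lintegral_smul_measure, smul_eq_mul]

lemma bind_iterP [MeasurableSpace M] {P : M → Measure M} (hP : Measurable P)
    (μ : Measure M) (c : ENNReal) (heig : μ.bind P = c • μ) :
    ∀ n, μ.bind (iterP P n) = c ^ n • μ
  | 0 => by simp [iterP]
  | n + 1 => by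
    have : μ.bind (iterP P (n + 1)) = (μ.bind P).bind (iterP P n) := by
      rw [Measure.bind_bind hP.aemeasurable (measurable_iterP hP n).aemeasurable]
      rfl
    rw [this, heig, smul_bind' c μ (measurable_iterP hP n), bind_iterP hP μ c heig n,
      smul_smul, pow_succ, mul_comm]

/-- **Lemma (full support of eigenmeasures).** Under Hypothesis (H), any nonzero finite
nonnegative Borel measure `μ` with `ℒμ = λ₀μ` for some `λ₀ > 0` has full support: every
nonempty open set has positive `μ`-measure. -/
theorem eigenmeasure_full_support_of_hypH
    [MetricSpace M] [CompactSpace M] [MeasurableSpace M] [BorelSpace M]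
    (ρ : Measure M) [IsFiniteMeasure ρ] (P : M → Measure M) (hH : HypH P ρ)
    (μ : Measure M) (hfin : IsFiniteMeasure μ) (hne : μ ≠ 0)
    (lam₀ : ℝ) (hlam₀ : 0 < lam₀) (heig : μ.bind P = ENNReal.ofReal lam₀ • μ) :
    ∀ U : Set M, IsOpen U → U.Nonempty → 0 < μ U := by
  intro U hU hUne
  by_contra h
  push_neg at h
  have hU0 : μ U = 0 := le_antisymm h (zero_le)
  set c := ENNReal.ofReal lam₀ with hc
  have hc0 : c ≠ 0 := by
    simp only [hc, ne_eq, ENNReal.ofReal_eq_zero, not_le]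
    exact hlam₀
  have key : ∀ n, ∀ᵐ x ∂μ, iterP P n x U = 0 := by
    intro n
    have hb := bind_iterP hH.meas μ c heig n
    have h1 : ∫⁻ x, iterP P n x U ∂μ = 0 := by
      have h2 := congrArg (fun m : Measure M => m U) hb
      rw [Measure.bind_apply hU.measurableSet (measurable_iterP hH.meas n).aemeasurable] at h2
      rw [h2, Measure.smul_apply, hU0, smul_eq_mul, mul_zero]
    exact (lintegral_eq_zero_iff
      ((Measure.measurable_coe hU.measurableSet).comp (measurable_iterP hH.meas n))).mp h1
  have key' : ∀ᵐ x ∂μ, ∀ n, iterP P n x U = 0 := ae_all_iff.mpr key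
  by_cases hS : μ {x | P x Set.univ ≠ 0} = 0
  · have hz : μ.bind P Set.univ = 0 := by
      rw [Measure.bind_apply MeasurableSet.univ hH.meas.aemeasurable]
      have hae : (fun x => P x Set.univ) =ᵐ[μ] (fun _ => 0) := by
        rw [EventuallyEq, ae_iff]
        simpa using hS
      rw [lintegral_congr_ae hae, lintegral_zero]
    rw [heig, Measure.smul_apply, smul_eq_mul] at hz
    rcases mul_eq_zero.mp hz with h' | h'
    · exact hc0 h'
    · exact hne (Measure.measure_univ_eq_zero.mp h')
  · have hT : μ {x | ¬ ∀ n, iterP P n x U = 0} = 0 := by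
      rw [ae_iff] at key'; exact key'
    have hpos : μ ({x | P x Set.univ ≠ 0} \ {x | ¬ ∀ n, iterP P n x U = 0}) ≠ 0 := by
      rw [measure_diff_null hT]; exact hS
    obtain ⟨x, hx1, hx2⟩ := nonempty_of_measure_ne_zero hpos
    simp only [Set.mem_setOf_eq, not_not] at hx2
    obtain ⟨n, -, hn⟩ := hH.irred x hx1 U hU hUne
    rw [hx2 n] at hn
    exact lt_irrefl 0 hn
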